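/- Let n ≥ 2, let m be a permutation of {1, …, n}, and let p₁, …, pₙ and q₁, …, qₙ be elements of {+1, −1}. Let A be the n × n real matrix whose i-th row is pᵢ e_{m(i)} + q_{i+1} e_{m(i+1)} for 1 ≤ i ≤ n − 1 and whose n-th row is pₙ e_{m(n)} + q₁ e_{m(1)}. Then |det A| = |∏_{i=1}^{n} pᵢ + (−1)^{n−1} ∏_{i=1}^{n} qᵢ|. In particular, if A is invertible then |det A| = 2. -/

import Mathlib

/-- The cyclic successor on `Fin n`. -/
def cyclicSucc {n : ℕ} (hn : 0 < n) (i : Fin n) : Fin n :=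
  ⟨((i : ℕ) + 1) % n, Nat.mod_lt _ hn⟩

lemma cyclicSucc_eq {k : ℕ} (h : 0 < k + 2) (i : Fin (k + 2)) :
    cyclicSucc h i = i + 1 := by
  apply Fin.ext
  simp [cyclicSucc, Fin.add_def]

open Fin.NatCast in
lemma perm_cyclic' {k : ℕ} (σ : Equiv.Perm (Fin (k + 2)))
    (h : ∀ i, σ i = i ∨ σ i = i + 1) : σ = 1 ∨ σ = finRotate (k + 2) := by
  by_cases h1 : σ = 1
  · exact Or.inl h1
  right
  have hex : ∃ i₀, σ i₀ ≠ i₀ := by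
    by_contra hc
    push_neg at hc
    exact h1 (Equiv.ext fun i => hc i)
  obtain ⟨i₀, hi₀⟩ := hex
  have hbase : σ i₀ = i₀ + 1 := (h i₀).resolve_left hi₀
  have key : ∀ j : ℕ, σ (i₀ + (j : Fin (k + 2))) = i₀ + (j : Fin (k + 2)) + 1 := by
    intro j
    induction j with
    | zero => simpa using hbase
    | succ j ih =>
      push_cast
      rw [← add_assoc]
      rcases h (i₀ + (j : Fin (k + 2)) + 1) with hcase | hcase
      · exfalso
        have heq : i₀ + (j : Fin (k + 2)) + 1 = i₀ + (j : Fin (k + 2)) :=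
          σ.injective (by rw [hcase, ih])
        have h10 : (1 : Fin (k + 2)) = 0 :=
          add_left_cancel (a := i₀ + (j : Fin (k + 2))) (by rw [add_zero]; exact heq)
        simp [Fin.ext_iff] at h10
      · exact hcase
  refine Equiv.ext fun j => ?_
  have hj := key ((j - i₀).val)
  rw [Fin.cast_val_eq_self] at hj
  rw [finRotate_succ_apply]
  have heq : i₀ + (j - i₀) = j := by abel
  rwa [heq] at hj

lemma fin_ne_add_one {k : ℕ} (i : Fin (k + 2)) : i ≠ i + 1 := by
  intro h
  have : (1 : Fin (k + 2)) = 0 := by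
    have := (left_eq_add).mp h
    exact this
  simp [Fin.ext_iff] at this


/-- determinant of a loop: if the `i`-th row of `A` is
`pᵢ e_{m(i)} + q_{i+1} e_{m(i+1)}` (indices cyclic mod `n`, `m` a permutation,
`pᵢ, qᵢ ∈ {±1}`), then `|det A| = |∏ pᵢ + (−1)^{n−1} ∏ qᵢ|`; in particular if
`A` is invertible then `|det A| = 2`. -/
theorem loop_matrix_abs_det (n : ℕ) (hn : 2 ≤ n) (m : Equiv.Perm (Fin n))
    (p q : Fin n → ℝ)
    (hp : ∀ i, p i = 1 ∨ p i = -1) (hq : ∀ i, q i = 1 ∨ q i = -1)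
    (A : Matrix (Fin n) (Fin n) ℝ)
    (hA : ∀ i, A i = p i • (Pi.single (m i) 1 : Fin n → ℝ)
      + q (cyclicSucc (by omega) i) •
        (Pi.single (m (cyclicSucc (by omega) i)) 1 : Fin n → ℝ)) :
    |A.det| = |(∏ i, p i) + (-1) ^ (n - 1) * ∏ i, q i| ∧
      (A.det ≠ 0 → |A.det| = 2) := by
  obtain ⟨k, rfl⟩ : ∃ k, n = k + 2 := ⟨n - 2, by omega⟩
  have hpos : 0 < k + 2 := by omega
  set C : Matrix (Fin (k + 2)) (Fin (k + 2)) ℝ :=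
    Matrix.of (fun i j => A i (m j)) with hC
  have hCentry : ∀ i j, C i j
      = (if j = i then p i else 0) + (if j = i + 1 then q (i + 1) else 0) := by
    intro i j
    have := congrFun (hA i) (m j)
    simp only [cyclicSucc_eq] at this
    simp only [hC, Matrix.of_apply, this, Pi.add_apply, Pi.smul_apply,
      Pi.single_apply, m.injective.eq_iff, smul_eq_mul, mul_ite, mul_one, mul_zero]
  have hC1 : ∀ i, C i i = p i := by
    intro i
    rw [hCentry]
    simp [(fin_ne_add_one i).symm]
  have hC2 : ∀ i, C i (i + 1) = q (i + 1) := by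
    intro i
    rw [hCentry]
    simp [fin_ne_add_one i]
  have hC0 : ∀ i j, j ≠ i → j ≠ i + 1 → C i j = 0 := by
    intro i j h1 h2
    rw [hCentry]
    simp [h1, h2]
  have hne : (1 : Equiv.Perm (Fin (k + 2))) ≠ finRotate (k + 2) := by
    intro h
    have h0 := congrArg (fun e : Equiv.Perm (Fin (k + 2)) => e 0) h
    simp only [Equiv.Perm.one_apply, finRotate_succ_apply, zero_add] at h0
    simp [Fin.ext_iff] at h0
  have hdetC : C.det = (∏ i, p i) + (-1 : ℝ) ^ (k + 1) * ∏ i, q i := by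
    rw [← Matrix.det_transpose, Matrix.det_apply']
    rw [← Finset.sum_subset (Finset.subset_univ
      ({1, finRotate (k + 2)} : Finset (Equiv.Perm (Fin (k + 2)))))]
    · rw [Finset.sum_pair hne]
      have t1 : ∏ i, C.transpose ((1 : Equiv.Perm (Fin (k+2))) i) i = ∏ i, p i := by
        refine Finset.prod_congr rfl fun i _ => ?_
        simp [Matrix.transpose_apply, hC1]
      have t2 : ∏ i, C.transpose (finRotate (k + 2) i) i = ∏ i, q i := by
        rw [show ∏ i, C.transpose (finRotate (k + 2) i) i = ∏ i, q (i + 1) from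
          Finset.prod_congr rfl fun i _ => by
            simp [Matrix.transpose_apply, finRotate_succ_apply, hC2]]
        exact Fintype.prod_equiv (Equiv.addRight (1 : Fin (k + 2))) _ _ fun i => rfl
      rw [t1, t2, Equiv.Perm.sign_one, sign_finRotate]
      push_cast
      ring
    · intro σ _ hσ
      simp only [Finset.mem_insert, Finset.mem_singleton] at hσ
      push_neg at hσ
      have : ¬ ∀ i, σ i = i ∨ σ i = i + 1 := by
        intro hall
        rcases perm_cyclic' σ hall with h | h
        · exact hσ.1 h
        · exact hσ.2 h
      push_neg at this
      obtain ⟨i, hi1, hi2⟩ := this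
      have : ∏ j, C.transpose (σ j) j = 0 :=
        Finset.prod_eq_zero (Finset.mem_univ i)
          (by rw [Matrix.transpose_apply]; exact hC0 i (σ i) hi1 hi2)
      rw [this, mul_zero]
  have hAeq : A = C.submatrix id ⇑m⁻¹ := by
    ext i j
    simp [hC, Matrix.submatrix_apply]
  have habs : |A.det| = |C.det| := by
    rw [hAeq, Matrix.det_permute', abs_mul]
    rcases Int.units_eq_one_or (Equiv.Perm.sign m⁻¹) with h | h <;> simp [h]
  have hfirst : |A.det| = |(∏ i, p i) + (-1 : ℝ) ^ (k + 2 - 1) * ∏ i, q i| := by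
    rw [habs, hdetC]
    norm_num
  refine ⟨hfirst, fun hdet => ?_⟩
  have hP : (∏ i, p i) = 1 ∨ (∏ i, p i) = -1 := by
    have : |∏ i, p i| = 1 := by
      rw [Finset.abs_prod]
      exact Finset.prod_eq_one fun i _ => by rcases hp i with h | h <;> simp [h]
    exact (abs_eq (by norm_num)).mp this
  have hQ : (∏ i, q i) = 1 ∨ (∏ i, q i) = -1 := by
    have : |∏ i, q i| = 1 := by
      rw [Finset.abs_prod]
      exact Finset.prod_eq_one fun i _ => by rcases hq i with h | h <;> simp [h]
    exact (abs_eq (by norm_num)).mp this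
  have hE : ((-1 : ℝ)) ^ (k + 2 - 1) = 1 ∨ ((-1 : ℝ)) ^ (k + 2 - 1) = -1 := by
    rcases Nat.even_or_odd (k + 2 - 1) with h | h
    · exact Or.inl h.neg_one_pow
    · exact Or.inr h.neg_one_pow
  have hSne : |(∏ i, p i) + (-1 : ℝ) ^ (k + 2 - 1) * ∏ i, q i| ≠ 0 := by
    rw [← hfirst]
    simpa using hdet
  rw [hfirst]
  rcases hP with h1 | h1 <;> rcases hQ with h2 | h2 <;> rcases hE with h3 | h3 <;>
    rw [h1, h2, h3] at hSne ⊢ <;> revert hSne <;> norm_num
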